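/- Let l ≥ 1, let L be a subgroup of ℤ^l, and let w ∈ ℝ^l be a vector lying in the ℝ-linear span of (the image in ℝ^l of) L, with w_i > 0 for every i. Let p > 0 be a real number. Then for every ε' > 0 there exist a positive integer D, an element v ∈ L with v_i > 0 for all i, and a real number ε > 0, such that p·D·ε + p·D·max_{1≤i≤l} ( |w_i − v_i/D| / w_i ) < ε'. -/

import Mathlib

lemma simul_dirichlet (n : ℕ) (c : Fin n → ℝ) {δ : ℝ} (hδ : 0 < δ) :
    ∃ D : ℕ, 0 < D ∧ ∃ a : Fin n → ℤ, ∀ j, |(D : ℝ) * c j - (a j : ℝ)| < δ := by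
  obtain ⟨m, hm⟩ := exists_nat_gt (1 / δ)
  have hm0 : 0 < m := by
    rcases Nat.eq_zero_or_pos m with h | h
    · exfalso; rw [h] at hm; simp at hm
      have : 0 < 1 / δ := by positivity
      linarith
    · exact h
  have hmR : (0:ℝ) < m := by exact_mod_cast hm0
  have hinv : 1 / (m : ℝ) < δ := by
    rw [div_lt_iff₀ hmR]; rw [div_lt_iff₀ hδ] at hm; nlinarith
  have key : ∀ (D : ℕ) (j : Fin n),
      (⌊(m : ℝ) * Int.fract ((D : ℝ) * c j)⌋).toNat < m := by
    intro D j
    have h1 : (m : ℝ) * Int.fract ((D : ℝ) * c j) < m := by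
      have := Int.fract_lt_one ((D : ℝ) * c j)
      nlinarith
    have h2 : ⌊(m : ℝ) * Int.fract ((D : ℝ) * c j)⌋ < (m : ℤ) :=
      Int.floor_lt.mpr (by exact_mod_cast h1)
    omega
  set F : ℕ → Fin n → Fin m := fun D j =>
    ⟨(⌊(m : ℝ) * Int.fract ((D : ℝ) * c j)⌋).toNat, key D j⟩ with hF
  obtain ⟨D1, D2, hne, heq⟩ := Finite.exists_ne_map_eq_of_infinite F
  wlog hlt : D1 < D2 generalizing D1 D2
  · exact this D2 D1 hne.symm heq.symm (by omega)
  refine ⟨D2 - D1, by omega, fun j => ⌊(D2 : ℝ) * c j⌋ - ⌊(D1 : ℝ) * c j⌋, fun j => ?_⟩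
  have hfl : ⌊(m : ℝ) * Int.fract ((D1 : ℝ) * c j)⌋ = ⌊(m : ℝ) * Int.fract ((D2 : ℝ) * c j)⌋ := by
    have h := congrFun heq j
    simp only [hF, Fin.mk.injEq] at h
    have h1 : (0:ℤ) ≤ ⌊(m : ℝ) * Int.fract ((D1 : ℝ) * c j)⌋ :=
      Int.floor_nonneg.mpr (by have := Int.fract_nonneg ((D1 : ℝ) * c j); positivity)
    have h2 : (0:ℤ) ≤ ⌊(m : ℝ) * Int.fract ((D2 : ℝ) * c j)⌋ :=
      Int.floor_nonneg.mpr (by have := Int.fract_nonneg ((D2 : ℝ) * c j); positivity)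
    omega
  have habs := Int.abs_sub_lt_one_of_floor_eq_floor hfl
  have hfr : |Int.fract ((D1 : ℝ) * c j) - Int.fract ((D2 : ℝ) * c j)| < 1 / m := by
    rw [← mul_sub, abs_mul, abs_of_pos hmR] at habs
    rw [lt_div_iff₀ hmR]
    linarith [abs_nonneg (Int.fract ((D1 : ℝ) * c j) - Int.fract ((D2 : ℝ) * c j))]
  have hcast : ((D2 - D1 : ℕ) : ℝ) = (D2 : ℝ) - (D1 : ℝ) := by
    push_cast [Nat.cast_sub hlt.le]; ring
  have hexp : ((D2 - D1 : ℕ) : ℝ) * c j - ((⌊(D2 : ℝ) * c j⌋ - ⌊(D1 : ℝ) * c j⌋ : ℤ) : ℝ)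
      = Int.fract ((D2 : ℝ) * c j) - Int.fract ((D1 : ℝ) * c j) := by
    rw [hcast]
    unfold Int.fract
    push_cast
    ring
  rw [hexp, abs_sub_comm]
  linarith


/-- Dirichlet-type simultaneous Diophantine approximation inside a sublattice
(Claim 4.5 of the paper). -/
theorem stmt_0 (l : ℕ) (hl : 1 ≤ l) (L : AddSubgroup (Fin l → ℤ))
    (w : Fin l → ℝ)
    (hw : w ∈ Submodule.span ℝ
      ((fun v : Fin l → ℤ => fun i => (v i : ℝ)) '' (L : Set (Fin l → ℤ))))
    (hwpos : ∀ i, 0 < w i)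
    (p : ℝ) (hp : 0 < p) :
    ∀ ε' : ℝ, 0 < ε' →
      ∃ (D : ℕ) (v : Fin l → ℤ) (ε : ℝ),
        0 < D ∧ v ∈ L ∧ (∀ i, 0 < v i) ∧ 0 < ε ∧
        p * D * ε +
          p * D * (Finset.univ.sup' (Finset.univ_nonempty_iff.mpr ⟨⟨0, hl⟩⟩)
            fun i => |w i - (v i : ℝ) / (D : ℝ)| / w i) < ε' := by
  intro ε' hε'
  have ne : (Finset.univ : Finset (Fin l)).Nonempty :=
    Finset.univ_nonempty_iff.mpr ⟨⟨0, hl⟩⟩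
  obtain ⟨n, f, g, hsum⟩ := Submodule.mem_span_set'.mp hw
  -- choose lattice representatives
  have hrep : ∀ j : Fin n, ∃ u : Fin l → ℤ, u ∈ L ∧ (fun i => ((u i : ℤ) : ℝ)) = (g j : Fin l → ℝ) := by
    intro j
    obtain ⟨u, hu, hug⟩ := (g j).2
    exact ⟨u, hu, hug⟩
  choose u huL hug using hrep
  have hwi : ∀ i, w i = ∑ j, f j * ((u j i : ℤ) : ℝ) := by
    intro i
    have := congrFun hsum i
    simp only [Finset.sum_apply, Pi.smul_apply, smul_eq_mul] at this
    rw [← this]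
    refine Finset.sum_congr rfl fun j _ => ?_
    rw [← hug j]
  -- constants
  set wmin : ℝ := Finset.univ.inf' ne w with hwmin_def
  have hwmin_pos : 0 < wmin := by
    rw [hwmin_def, Finset.lt_inf'_iff]
    exact fun i _ => hwpos i
  have hwmin_le : ∀ i, wmin ≤ w i := fun i => Finset.inf'_le _ (Finset.mem_univ i)
  set B : ℝ := (∑ j, ∑ i, |((u j i : ℤ) : ℝ)|) + 1 with hB_def
  have hB1 : 1 ≤ B := by
    have : (0:ℝ) ≤ ∑ j, ∑ i, |((u j i : ℤ) : ℝ)| := by positivity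
    simp [hB_def]; linarith
  have hB0 : 0 < B := by linarith
  have hBi : ∀ i, (∑ j, |((u j i : ℤ) : ℝ)|) ≤ B := by
    intro i
    have h1 : (∑ j, |((u j i : ℤ) : ℝ)|) ≤ ∑ j, ∑ i', |((u j i' : ℤ) : ℝ)| := by
      refine Finset.sum_le_sum fun j _ => ?_
      exact Finset.single_le_sum (f := fun i' => |((u j i' : ℤ) : ℝ)|)
        (fun i' _ => abs_nonneg _) (Finset.mem_univ i)
    linarith
  set δ0 : ℝ := min wmin (wmin * ε' / (2 * p)) / (2 * B) with hδ0_def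
  have hδ0 : 0 < δ0 := by
    apply div_pos _ (by linarith)
    exact lt_min hwmin_pos (by positivity)
  have hδ0B1 : δ0 * B < wmin := by
    rw [hδ0_def, div_mul_eq_mul_div, mul_comm (2:ℝ) B, ← div_div, mul_div_assoc,
      div_self (ne_of_gt hB0), mul_one]
    calc min wmin (wmin * ε' / (2 * p)) / 2 ≤ wmin / 2 := by
          apply div_le_div_of_nonneg_right (min_le_left _ _) (by norm_num) |>.trans_eq rfl
      _ < wmin := by linarith
  have hδ0B2 : δ0 * B < wmin * ε' / (2 * p) := by
    rw [hδ0_def, div_mul_eq_mul_div, mul_comm (2:ℝ) B, ← div_div, mul_div_assoc,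
      div_self (ne_of_gt hB0), mul_one]
    calc min wmin (wmin * ε' / (2 * p)) / 2 ≤ (wmin * ε' / (2 * p)) / 2 :=
          div_le_div_of_nonneg_right (min_le_right _ _) (by norm_num)
      _ < wmin * ε' / (2 * p) := by
          have : 0 < wmin * ε' / (2 * p) := by positivity
          linarith
  obtain ⟨D, hD, a, ha⟩ := simul_dirichlet n f hδ0
  have hDR : (0:ℝ) < D := by exact_mod_cast hD
  have hD1 : (1:ℝ) ≤ D := by exact_mod_cast hD
  set v : Fin l → ℤ := ∑ j, a j • u j with hv_def
  have hvL : v ∈ L := by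
    apply AddSubgroup.sum_mem
    intro j _
    exact AddSubgroup.zsmul_mem L (huL j) (a j)
  have hvi : ∀ i, ((v i : ℤ) : ℝ) = ∑ j, (a j : ℝ) * ((u j i : ℤ) : ℝ) := by
    intro i
    rw [hv_def]
    push_cast [Finset.sum_apply, Pi.smul_apply, smul_eq_mul]
    norm_cast
  -- key estimate
  have hest : ∀ i, |(D : ℝ) * w i - ((v i : ℤ) : ℝ)| ≤ δ0 * B := by
    intro i
    rw [hvi, hwi i, Finset.mul_sum, ← Finset.sum_sub_distrib]
    calc |∑ j, ((D:ℝ) * (f j * ((u j i : ℤ):ℝ)) - (a j : ℝ) * ((u j i : ℤ):ℝ))|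
        ≤ ∑ j, |(D:ℝ) * (f j * ((u j i : ℤ):ℝ)) - (a j : ℝ) * ((u j i : ℤ):ℝ)| :=
          Finset.abs_sum_le_sum_abs _ _
      _ ≤ ∑ j, δ0 * |((u j i : ℤ):ℝ)| := by
          refine Finset.sum_le_sum fun j _ => ?_
          have : (D:ℝ) * (f j * ((u j i : ℤ):ℝ)) - (a j : ℝ) * ((u j i : ℤ):ℝ)
              = ((D:ℝ) * f j - (a j : ℝ)) * ((u j i : ℤ):ℝ) := by ring
          rw [this, abs_mul]
          exact mul_le_mul_of_nonneg_right (ha j).le (abs_nonneg _)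
      _ = δ0 * ∑ j, |((u j i : ℤ):ℝ)| := by rw [Finset.mul_sum]
      _ ≤ δ0 * B := mul_le_mul_of_nonneg_left (hBi i) hδ0.le
  -- positivity of v
  have hvpos : ∀ i, 0 < v i := by
    intro i
    have h1 : (D : ℝ) * w i - δ0 * B ≤ ((v i : ℤ) : ℝ) := by
      have := abs_le.mp (hest i)
      linarith [this.1]
    have h2 : w i ≤ (D : ℝ) * w i := by nlinarith [hwpos i]
    have h3 : (0:ℝ) < ((v i : ℤ) : ℝ) := by
      have := hwmin_le i
      linarith
    exact_mod_cast h3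
  refine ⟨D, v, ε' / (4 * p * D), hD, hvL, hvpos, by positivity, ?_⟩
  have hterm1 : p * D * (ε' / (4 * p * D)) = ε' / 4 := by
    field_simp
  have hsup : (Finset.univ.sup' ne fun i => |w i - ((v i : ℤ) : ℝ) / (D : ℝ)| / w i)
      ≤ δ0 * B / ((D : ℝ) * wmin) := by
    apply Finset.sup'_le
    intro i _
    have heq : |w i - ((v i : ℤ) : ℝ) / (D : ℝ)| = |(D : ℝ) * w i - ((v i : ℤ) : ℝ)| / D := by
      rw [eq_div_iff (ne_of_gt hDR), ← abs_of_pos hDR, ← abs_mul]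
      congr 1
      field_simp
      rw [abs_of_pos hDR]; ring
    rw [heq, div_div]
    exact div_le_div₀ (by positivity) (hest i) (by positivity)
      (mul_le_mul_of_nonneg_left (hwmin_le i) hDR.le)
  have hfin : p * D * (Finset.univ.sup' ne fun i => |w i - ((v i : ℤ) : ℝ) / (D : ℝ)| / w i)
      ≤ p * (δ0 * B) / wmin := by
    have h1 := mul_le_mul_of_nonneg_left hsup (by positivity : (0:ℝ) ≤ p * D)
    have h2 : p * (D : ℝ) * (δ0 * B / ((D : ℝ) * wmin)) = p * (δ0 * B) / wmin := by
      field_simp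
    linarith [h2 ▸ h1]
  have hfin2 : p * (δ0 * B) / wmin < ε' / 2 := by
    rw [div_lt_iff₀ hwmin_pos]
    have := mul_lt_mul_of_pos_left hδ0B2 hp
    calc p * (δ0 * B) < p * (wmin * ε' / (2 * p)) := this
      _ = ε' / 2 * wmin := by field_simp
  rw [hterm1]
  linarith
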